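/- For an integer m ≥ 2, let L be the m×m real symmetric matrix with entries L_{rs} = −1/(k + k²) where k = max(r,s), for r ≠ s, and L_{ss} = (s − 1 − s²)/(s + s²) + m/(m+1). Then the set of eigenvalues of L is exactly {0} ∪ {m/(m+1) − i/(i+2) : i = 1, …, m−1}. -/

import Mathlib

open Finset

/-- The `m × m` matrix of the Lichnerowicz Laplacian of the standard metric on the
Ledger–Obata space `F^{m+1}/Δ^{m+1}F` (a Lean index `r : Fin m` corresponds to the paper
index `r + 1`). -/
noncomputable def Lmat (m : ℕ) : Matrix (Fin m) (Fin m) ℝ :=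
  fun r s =>
    if r = s then
      (((s : ℕ) : ℝ) + 1 - 1 - (((s : ℕ) : ℝ) + 1) ^ 2) /
          ((((s : ℕ) : ℝ) + 1) + (((s : ℕ) : ℝ) + 1) ^ 2) + (m : ℝ) / ((m : ℝ) + 1)
    else
      -1 / (((max (r : ℕ) (s : ℕ) : ℕ) : ℝ) + 1 + (((max (r : ℕ) (s : ℕ) : ℕ) : ℝ) + 1) ^ 2)

/-- `ℕ`-indexed version of the matrix entries. -/
noncomputable def Lfun (m r s : ℕ) : ℝ :=
  if r = s then
    ((s : ℝ) + 1 - 1 - ((s : ℝ) + 1) ^ 2) / (((s : ℝ) + 1) + ((s : ℝ) + 1) ^ 2)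
      + (m : ℝ) / ((m : ℝ) + 1)
  else
    -1 / (((max r s : ℕ) : ℝ) + 1 + (((max r s : ℕ) : ℝ) + 1) ^ 2)

lemma Lmat_eq (m : ℕ) (r s : Fin m) : Lmat m r s = Lfun m r.val s.val := by
  unfold Lmat Lfun
  rcases eq_or_ne r s with h | h
  · simp [h]
  · rw [if_neg h, if_neg (fun hv => h (Fin.val_injective hv))]

lemma Lfun_lt (m r s : ℕ) (h : s < r) :
    Lfun m r s = -1 / (((r : ℝ) + 1) * ((r : ℝ) + 2)) := by
  unfold Lfun
  rw [if_neg (by omega), max_eq_left h.le]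
  congr 1
  ring

lemma Lfun_gt (m r s : ℕ) (h : r < s) :
    Lfun m r s = -1 / (((s : ℝ) + 1) * ((s : ℝ) + 2)) := by
  unfold Lfun
  rw [if_neg (by omega), max_eq_right h.le]
  congr 1
  ring

lemma Lfun_diag (m r : ℕ) :
    Lfun m r r = ((r : ℝ) + 1 - 1 - ((r : ℝ) + 1) ^ 2) / (((r : ℝ) + 1) + ((r : ℝ) + 1) ^ 2)
      + (m : ℝ) / ((m : ℝ) + 1) := by
  simp [Lfun]

lemma tel (n : ℕ) :
    ∑ j ∈ range n, (1 : ℝ) / (((j : ℝ) + 1) * ((j : ℝ) + 2)) = (n : ℝ) / ((n : ℝ) + 1) := by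
  induction n with
  | zero => simp
  | succ n ih =>
    rw [Finset.sum_range_succ, ih]
    have h1 : ((n : ℝ) + 1) ≠ 0 := by positivity
    have h2 : ((n : ℝ) + 2) ≠ 0 := by positivity
    push_cast
    field_simp
    ring

lemma rowB (m r n : ℕ) (h : n ≤ r) :
    ∑ s ∈ range n, Lfun m r s = -(n : ℝ) / (((r : ℝ) + 1) * ((r : ℝ) + 2)) := by
  rw [Finset.sum_congr rfl
    (fun s hs => Lfun_lt m r s (lt_of_lt_of_le (Finset.mem_range.mp hs) h))]
  rw [Finset.sum_const, Finset.card_range, nsmul_eq_mul]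
  ring

lemma rowA (m r n : ℕ) (hr : r < n) (hn : n ≤ m) :
    ∑ s ∈ range n, Lfun m r s = (m : ℝ) / ((m : ℝ) + 1) - (n : ℝ) / ((n : ℝ) + 1) := by
  have hsplit : ∑ s ∈ range n, Lfun m r s
      = ∑ s ∈ range (r + 1), Lfun m r s + ∑ s ∈ Ico (r + 1) n, Lfun m r s := by
    rw [Finset.range_eq_Ico, ← Finset.sum_Ico_consecutive (fun s => Lfun m r s)
      (Nat.zero_le (r + 1)) hr, ← Finset.range_eq_Ico]
  have htail : ∑ s ∈ Ico (r + 1) n, Lfun m r s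
      = -((n : ℝ) / ((n : ℝ) + 1) - ((r : ℝ) + 1) / ((r : ℝ) + 2)) := by
    rw [Finset.sum_congr rfl
      (fun s hs => Lfun_gt m r s (lt_of_lt_of_le (Nat.lt_succ_self r) (Finset.mem_Ico.mp hs).1))]
    have hneg : ∀ s : ℕ, (-1 : ℝ) / (((s : ℝ) + 1) * ((s : ℝ) + 2))
        = -((1 : ℝ) / (((s : ℝ) + 1) * ((s : ℝ) + 2))) := by intro s; ring
    simp only [hneg]
    rw [Finset.sum_neg_distrib, Finset.sum_Ico_eq_sub _ hr, tel, tel]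
    push_cast
    ring
  rw [hsplit, Finset.sum_range_succ, rowB m r r le_rfl, Lfun_diag, htail]
  have h1 : ((r : ℝ) + 1) ≠ 0 := by positivity
  have h2 : ((r : ℝ) + 2) ≠ 0 := by positivity
  have h3 : ((m : ℝ) + 1) ≠ 0 := by positivity
  have h4 : ((n : ℝ) + 1) ≠ 0 := by positivity
  have h5 : ((r : ℝ) + 1) + ((r : ℝ) + 1) ^ 2 ≠ 0 := by positivity
  field_simp
  ring

/-- The eigenvector for the eigenvalue `m/(m+1) - i/(i+2)`. -/
noncomputable def w (i : ℕ) : ℕ → ℝ := fun s => if s < i then 1 else if s = i then -(i : ℝ) else 0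

lemma sum_reduce (m i : ℕ) (him : i < m) (g : ℕ → ℝ) :
    ∑ s ∈ range m, g s * w i s = (∑ s ∈ range i, g s) + g i * (-(i : ℝ)) := by
  have hsub : (range (i + 1)) ⊆ range m := Finset.range_subset_range.mpr (by omega)
  have hz : ∀ s ∈ range m, s ∉ range (i + 1) → g s * w i s = 0 := by
    intro s hs hns
    have h1 : ¬ s < i := by simp only [Finset.mem_range] at hns; omega
    have h2 : s ≠ i := by simp only [Finset.mem_range] at hns; omega
    simp [w, h1, h2]
  rw [← Finset.sum_subset hsub hz, Finset.sum_range_succ]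
  congr 1
  · refine Finset.sum_congr rfl fun s hs => ?_
    have : s < i := Finset.mem_range.mp hs
    simp [w, this]
  · simp [w]

lemma eig0 (m r : ℕ) (hr : r < m) : ∑ s ∈ range m, Lfun m r s * 1 = 0 * 1 := by
  simp only [mul_one, mul_zero, zero_mul]
  rw [rowA m r m hr le_rfl, sub_self]

lemma eig (m i : ℕ) (hi : 1 ≤ i) (him : i < m) (r : ℕ) (hr : r < m) :
    ∑ s ∈ range m, Lfun m r s * w i s
      = ((m : ℝ) / ((m : ℝ) + 1) - (i : ℝ) / ((i : ℝ) + 2)) * w i r := by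
  rw [sum_reduce m i him]
  have h1 : ((i : ℝ) + 1) ≠ 0 := by positivity
  have h2 : ((i : ℝ) + 2) ≠ 0 := by positivity
  have h3 : ((m : ℝ) + 1) ≠ 0 := by positivity
  rcases lt_trichotomy r i with h | h | h
  · rw [rowA m r i h him.le, Lfun_gt m r i h]
    have hw : w i r = 1 := if_pos h
    rw [hw, mul_one]
    field_simp
    ring
  · subst h
    rw [rowB m r r le_rfl, Lfun_diag]
    have hw : w r r = -(r : ℝ) := by simp [w]
    rw [hw]
    have h4 : ((r : ℝ) + 1) ≠ 0 := by positivity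
    have h5 : ((r : ℝ) + 1) + ((r : ℝ) + 1) ^ 2 ≠ 0 := by positivity
    field_simp
    ring
  · rw [rowB m r i h.le, Lfun_lt m r i h]
    have hw : w i r = 0 := by
      have h1' : ¬ r < i := by omega
      have h2' : r ≠ i := by omega
      simp [w, h1', h2']
    rw [hw, mul_zero]
    ring

lemma mulVec_of (m : ℕ) (v : ℕ → ℝ) (μ : ℝ)
    (h : ∀ r < m, ∑ s ∈ range m, Lfun m r s * v s = μ * v r) :
    (Lmat m).mulVec (fun r => v r.val) = μ • (fun r : Fin m => v r.val) := by
  funext r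
  have hl : (Lmat m).mulVec (fun r => v r.val) r
      = ∑ s : Fin m, Lfun m r.val s.val * v s.val := by
    simp [Matrix.mulVec, dotProduct, Lmat_eq]
  rw [hl, Fin.sum_univ_eq_sum_range (fun k => Lfun m r.val k * v k) m, h r.val r.isLt]
  simp

lemma fr_inj {i j : ℕ} (h : (i : ℝ) / ((i : ℝ) + 2) = (j : ℝ) / ((j : ℝ) + 2)) : i = j := by
  have hi : ((i : ℝ) + 2) ≠ 0 := by positivity
  have hj : ((j : ℝ) + 2) ≠ 0 := by positivity
  field_simp at h
  have : (i : ℝ) = j := by nlinarith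
  exact_mod_cast this

lemma ev_pos {m i : ℕ} (hi : 1 ≤ i) (him : i < m) :
    0 < (m : ℝ) / ((m : ℝ) + 1) - (i : ℝ) / ((i : ℝ) + 2) := by
  rw [sub_pos, div_lt_div_iff₀ (by positivity) (by positivity)]
  have : (i : ℝ) < m := by exact_mod_cast him
  nlinarith

/-- The set of eigenvalues of `L` is exactly `{0} ∪ {m/(m+1) - i/(i+2) : i = 1, …, m-1}`. -/
theorem Lmat_spectrum (m : ℕ) (hm : 2 ≤ m) :
    {μ : ℝ | ∃ v : Fin m → ℝ, v ≠ 0 ∧ (Lmat m).mulVec v = μ • v} =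
      {0} ∪ {a : ℝ | ∃ i : ℕ, 1 ≤ i ∧ i ≤ m - 1 ∧
        a = (m : ℝ) / ((m : ℝ) + 1) - (i : ℝ) / ((i : ℝ) + 2)} := by
  ext μ
  simp only [Set.mem_setOf_eq, Set.mem_union, Set.mem_singleton_iff]
  constructor
  · rintro ⟨v, hv, hveq⟩
    by_contra hμ
    push_neg at hμ
    obtain ⟨hμ0, hμi⟩ := hμ
    -- set up the m known eigenvectors together with v
    set f : Module.End ℝ (Fin m → ℝ) := Matrix.mulVecLin (Lmat m) with hf
    set ev : ℕ → ℝ := fun i => if i = 0 then 0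
      else (m : ℝ) / ((m : ℝ) + 1) - (i : ℝ) / ((i : ℝ) + 2) with hev
    set vecs : ℕ → (Fin m → ℝ) := fun i => if i = 0 then (fun _ => 1)
      else (fun r => w i r.val) with hvecs
    set μs : Fin (m + 1) → ℝ := fun j => if j.val < m then ev j.val else μ with hμs
    set xs : Fin (m + 1) → (Fin m → ℝ) := fun j => if j.val < m then vecs j.val else v with hxs
    have heig : ∀ j, f.HasEigenvector (μs j) (xs j) := by
      intro j
      rw [Module.End.hasEigenvector_iff, Module.End.mem_eigenspace_iff]
      by_cases hj : j.val < m
      · simp only [hμs, hxs, hj, if_pos]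
        by_cases hj0 : j.val = 0
        · simp only [hev, hvecs, hj0, if_pos]
          constructor
          · rw [hf, Matrix.mulVecLin_apply]
            exact mulVec_of m (fun _ => 1) 0 (fun r hr => eig0 m r hr)
          · intro h0
            have := congrFun h0 (⟨0, by omega⟩ : Fin m)
            norm_num at this
        · simp only [hev, hvecs, hj0, if_neg, if_neg hj0]
          constructor
          · rw [hf, Matrix.mulVecLin_apply]
            exact mulVec_of m (w j.val) _ (fun r hr => eig m j.val (by omega) hj r hr)
          · intro h0
            have := congrFun h0 (⟨0, by omega⟩ : Fin m)
            simp only [w, Pi.zero_apply] at this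
            rw [if_pos (show ((⟨0, by omega⟩ : Fin m) : ℕ) < j.val by change 0 < j.val; omega)] at this
            norm_num at this
      · simp only [hμs, hxs, hj, if_neg, if_neg hj]
        refine ⟨?_, hv⟩
        rw [hf, Matrix.mulVecLin_apply, hveq]
    have hμ_ne : ∀ k : ℕ, k < m → μ ≠ ev k := by
      intro k hk hcon
      by_cases hk0 : k = 0
      · rw [hev] at hcon; simp only [hk0, if_pos] at hcon; exact hμ0 hcon
      · rw [hev] at hcon
        simp only [hk0, if_neg] at hcon
        exact hμi k (by omega) (by omega) hcon
    have hev_inj : ∀ k l : ℕ, k < m → l < m → ev k = ev l → k = l := by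
      intro k l hk hl hkl
      rcases Nat.eq_zero_or_pos k with hk0 | hk0 <;> rcases Nat.eq_zero_or_pos l with hl0 | hl0
      · omega
      · exfalso
        rw [hev] at hkl
        simp only [hk0, if_pos, if_neg (by omega : ¬ l = 0)] at hkl
        exact absurd hkl.symm (ne_of_gt (ev_pos (by omega) hl))
      · exfalso
        rw [hev] at hkl
        simp only [hl0, if_pos, if_neg (by omega : ¬ k = 0)] at hkl
        exact absurd hkl (ne_of_gt (ev_pos (by omega) hk))
      · rw [hev] at hkl
        simp only [if_neg (by omega : ¬ k = 0), if_neg (by omega : ¬ l = 0)] at hkl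
        have : (k : ℝ) / ((k : ℝ) + 2) = (l : ℝ) / ((l : ℝ) + 2) := by linarith
        exact fr_inj this
    have hinj : Function.Injective μs := by
      intro a b hab
      rw [hμs] at hab
      by_cases ha : a.val < m <;> by_cases hb : b.val < m
      · simp only [ha, hb, if_pos] at hab
        exact Fin.ext (hev_inj a.val b.val ha hb hab)
      · simp only [ha, hb, if_pos, if_neg hb] at hab
        exact absurd hab.symm (hμ_ne a.val ha)
      · simp only [ha, hb, if_neg ha, if_pos] at hab
        exact absurd hab (hμ_ne b.val hb)
      · exact Fin.ext (by omega)
    have li := Module.End.eigenvectors_linearIndependent' f μs hinj xs heig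
    have hcard := li.fintype_card_le_finrank
    rw [Module.finrank_fintype_fun_eq_card] at hcard
    simp [Fintype.card_fin] at hcard
  · rintro (rfl | ⟨i, hi1, hi2, rfl⟩)
    · refine ⟨fun _ => 1, ?_, ?_⟩
      · intro h0
        have := congrFun h0 ⟨0, by omega⟩
        norm_num at this
      · exact mulVec_of m (fun _ => 1) 0 (fun r hr => eig0 m r hr)
    · have him : i < m := by omega
      refine ⟨fun r => w i r.val, ?_, ?_⟩
      · intro h0
        have := congrFun h0 ⟨0, by omega⟩
        simp only [w, Pi.zero_apply] at this
        rw [if_pos (by omega : 0 < i)] at this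
        norm_num at this
      · exact mulVec_of m (w i) _ (fun r hr => eig m i hi1 him r hr)
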